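/- Let S′ be a finite nonempty index set, let f_i > 0 and w_i ≥ 0 be given for each i ∈ S′, let f^max = max_{i∈S′} f_i and f^min = min_{i∈S′} f_i, let H ≥ 1 be an integer, and let values 0 ≤ ȳ_i ≤ 1 (i ∈ S′) satisfy Σ_{i∈S′} ȳ_i ≥ H. Then there exist 0/1 values ŷ_i (i ∈ S′) such that Σ_{i∈S′} w_i ŷ_i ≥ Σ_{i∈S′} w_i ȳ_i and Σ_{i∈S′} f_i ŷ_i ≤ (1 + f^max/(H · f^min)) · Σ_{i∈S′} f_i ȳ_i. -/

import Mathlib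

open Finset

private lemma sum_sub_support {ι : Type*} [DecidableEq ι] (S T : Finset ι) (g y z : ι → ℝ)
    (hT : T ⊆ S) (h : ∀ k ∈ S, k ∉ T → z k = y k) :
    ∑ k ∈ S, g k * z k = ∑ k ∈ S, g k * y k + ∑ k ∈ T, (g k * z k - g k * y k) := by
  have : ∑ k ∈ S, (g k * z k - g k * y k) = ∑ k ∈ T, (g k * z k - g k * y k) := by
    refine (Finset.sum_subset hT ?_).symm
    intro k hk hk'
    rw [h k hk hk']
    ring
  have h2 : ∑ k ∈ S, (g k * z k - g k * y k)
      = ∑ k ∈ S, g k * z k - ∑ k ∈ S, g k * y k := Finset.sum_sub_distrib _ _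
  linarith [this, h2]

private lemma round_lemma {ι : Type*} (S : Finset ι) (hS : S.Nonempty)
    (f w : ι → ℝ) (hf : ∀ i ∈ S, 0 < f i) (hw : ∀ i ∈ S, 0 ≤ w i) :
    ∀ n : ℕ, ∀ y : ι → ℝ, (∀ i ∈ S, 0 ≤ y i ∧ y i ≤ 1) →
    (S.filter (fun i => ¬ (y i = 0 ∨ y i = 1))).card ≤ n →
    ∃ yhat : ι → ℝ, (∀ i ∈ S, yhat i = 0 ∨ yhat i = 1) ∧
      (∑ i ∈ S, w i * y i ≤ ∑ i ∈ S, w i * yhat i) ∧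
      (∑ i ∈ S, f i * yhat i ≤ ∑ i ∈ S, f i * y i + S.sup' hS f) := by
  classical
  have hF : 0 < S.sup' hS f := by
    obtain ⟨a, ha⟩ := hS
    exact lt_of_lt_of_le (hf a ha) (Finset.le_sup' f ha)
  intro n
  induction n with
  | zero =>
    intro y hy hcard
    refine ⟨y, ?_, le_refl _, by linarith⟩
    intro i hi
    by_contra hcon
    have : i ∈ S.filter (fun i => ¬ (y i = 0 ∨ y i = 1)) := Finset.mem_filter.mpr ⟨hi, hcon⟩
    have := Finset.card_pos.mpr ⟨i, this⟩
    omega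
  | succ n ih =>
    intro y hy hcard
    by_cases hc : (S.filter (fun i => ¬ (y i = 0 ∨ y i = 1))).card ≤ n
    · exact ih y hy hc
    -- card = n + 1
    have hcard' : (S.filter (fun i => ¬ (y i = 0 ∨ y i = 1))).card = n + 1 := by omega
    by_cases hn : n = 0
    · -- exactly one fractional coordinate: round it up
      subst hn
      obtain ⟨j, hj⟩ := Finset.card_eq_one.mp hcard'
      have hjmem : j ∈ S.filter (fun i => ¬ (y i = 0 ∨ y i = 1)) := by
        rw [hj]; exact Finset.mem_singleton_self j
      obtain ⟨hjS, hjfrac⟩ := Finset.mem_filter.mp hjmem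
      set z : ι → ℝ := fun k => if k = j then 1 else y k with hz
      have hzeq : ∀ k ∈ S, k ∉ ({j} : Finset ι) → z k = y k := by
        intro k _ hk
        simp only [hz]
        rw [if_neg (by simpa using hk)]
      have hsub : ({j} : Finset ι) ⊆ S := Finset.singleton_subset_iff.mpr hjS
      have hw' := sum_sub_support S {j} w y z hsub hzeq
      have hf' := sum_sub_support S {j} f y z hsub hzeq
      simp only [Finset.sum_singleton] at hw' hf'
      have hzj : z j = 1 := by simp [hz]
      refine ⟨z, ?_, ?_, ?_⟩
      · intro i hi
        by_cases hij : i = j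
        · subst hij; right; exact hzj
        · have : z i = y i := by simp [hz, hij]
          rw [this]
          by_contra hcon
          have : i ∈ S.filter (fun i => ¬ (y i = 0 ∨ y i = 1)) := Finset.mem_filter.mpr ⟨hi, hcon⟩
          rw [hj, Finset.mem_singleton] at this
          exact hij this
      · rw [hw', hzj]
        have := hw j hjS
        have := (hy j hjS).2
        nlinarith
      · rw [hf', hzj]
        have h1 : f j ≤ S.sup' hS f := Finset.le_sup' f hjS
        have h2 := hf j hjS
        have := (hy j hjS).1
        nlinarith
    · -- at least two fractional coordinates: exchange
      have h2le : 1 < (S.filter (fun i => ¬ (y i = 0 ∨ y i = 1))).card := by omega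
      obtain ⟨i0, hi0, j0, hj0, hij0⟩ := Finset.one_lt_card.mp h2le
      -- WLOG w i * f j ≥ w j * f i
      obtain ⟨i, j, hi, hj, hij, hwf⟩ :
          ∃ i j, i ∈ S.filter (fun i => ¬ (y i = 0 ∨ y i = 1)) ∧
            j ∈ S.filter (fun i => ¬ (y i = 0 ∨ y i = 1)) ∧ i ≠ j ∧
            w j * f i ≤ w i * f j := by
        rcases le_total (w j0 * f i0) (w i0 * f j0) with h | h
        · exact ⟨i0, j0, hi0, hj0, hij0, h⟩
        · exact ⟨j0, i0, hj0, hi0, hij0.symm, h⟩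
      obtain ⟨hiS, hifrac⟩ := Finset.mem_filter.mp hi
      obtain ⟨hjS, hjfrac⟩ := Finset.mem_filter.mp hj
      have hfi := hf i hiS
      have hfj := hf j hjS
      have hyi := hy i hiS
      have hyj := hy j hjS
      have key : ∀ d : ℝ, d ≤ y j * f j / f i → d * f i / f j ≤ y j := by
        intro d hd
        rw [div_le_iff₀ hfj]
        exact (le_div_iff₀ hfi).mp hd
      obtain ⟨δ, hδ0, hδ1, hδ2, hend⟩ :
          ∃ δ : ℝ, 0 ≤ δ ∧ δ ≤ 1 - y i ∧ δ * f i / f j ≤ y j ∧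
            (y i + δ = 1 ∨ y j - δ * f i / f j = 0) := by
        rcases le_total (1 - y i) (y j * f j / f i) with h | h
        · exact ⟨1 - y i, by linarith [hyi.2], le_refl _, key _ h, Or.inl (by ring)⟩
        · refine ⟨y j * f j / f i, div_nonneg (mul_nonneg hyj.1 hfj.le) hfi.le, h,
            key _ le_rfl, Or.inr ?_⟩
          field_simp
          ring
      set z : ι → ℝ := fun k => if k = i then y i + δ else if k = j then y j - δ * f i / f j else y k
        with hz
      have hzi : z i = y i + δ := by simp [hz]
      have hzj : z j = y j - δ * f i / f j := by simp [hz, Ne.symm hij]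
      have hzk : ∀ x, x ≠ i → x ≠ j → z x = y x := by
        intro x h1 h2; simp [hz, h1, h2]
      -- bounds for z
      have hzbd : ∀ x ∈ S, 0 ≤ z x ∧ z x ≤ 1 := by
        intro x hx
        by_cases h1 : x = i
        · rw [h1, hzi]; exact ⟨by linarith [hyi.1], by linarith⟩
        by_cases h2 : x = j
        · rw [h2, hzj]
          have : 0 ≤ δ * f i / f j := div_nonneg (mul_nonneg hδ0 hfi.le) hfj.le
          exact ⟨by linarith, by linarith [hyj.2]⟩
        · rw [hzk x h1 h2]; exact hy x hx
      -- sums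
      have hsub : ({i, j} : Finset ι) ⊆ S := by
        intro x hx
        rcases Finset.mem_insert.mp hx with h | h
        · subst h; exact hiS
        · rw [Finset.mem_singleton] at h; subst h; exact hjS
      have hzeq : ∀ x ∈ S, x ∉ ({i, j} : Finset ι) → z x = y x := by
        intro x _ hx
        simp only [Finset.mem_insert, Finset.mem_singleton, not_or] at hx
        exact hzk x hx.1 hx.2
      have hpair : ∀ g : ι → ℝ, ∑ x ∈ ({i, j} : Finset ι), (g x * z x - g x * y x)
          = g i * δ - g j * (δ * f i / f j) := by
        intro g
        rw [Finset.sum_pair hij, hzi, hzj]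
        ring
      have hwsum := sum_sub_support S {i, j} w y z hsub hzeq
      have hfsum := sum_sub_support S {i, j} f y z hsub hzeq
      rw [hpair w] at hwsum
      rw [hpair f] at hfsum
      have hfeq : ∑ k ∈ S, f k * z k = ∑ k ∈ S, f k * y k := by
        rw [hfsum]
        have : f j * (δ * f i / f j) = δ * f i := by field_simp
        rw [this]; ring
      have hwle : ∑ k ∈ S, w k * y k ≤ ∑ k ∈ S, w k * z k := by
        rw [hwsum]
        have h' : w j * (δ * f i / f j) = w j * f i * δ / f j := by ring
        have h'' : w j * (δ * f i / f j) ≤ w i * δ := by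
          rw [h', div_le_iff₀ hfj]
          nlinarith [mul_le_mul_of_nonneg_right hwf hδ0]
        linarith
      -- fractional count decreases
      have hcardz : (S.filter (fun k => ¬ (z k = 0 ∨ z k = 1))).card ≤ n := by
        have hsubset : ∃ a ∈ S.filter (fun k => ¬ (y k = 0 ∨ y k = 1)),
            S.filter (fun k => ¬ (z k = 0 ∨ z k = 1)) ⊆
              (S.filter (fun k => ¬ (y k = 0 ∨ y k = 1))).erase a := by
          rcases hend with hmin | hmin
          · -- z i = 1
            refine ⟨i, hi, ?_⟩
            intro x hx
            obtain ⟨hxS, hxfrac⟩ := Finset.mem_filter.mp hx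
            have hxi : x ≠ i := by
              intro h; subst h
              exact hxfrac (Or.inr (by rw [hzi]; exact hmin))
            refine Finset.mem_erase.mpr ⟨hxi, Finset.mem_filter.mpr ⟨hxS, ?_⟩⟩
            by_cases hxj : x = j
            · subst hxj; exact hjfrac
            · rw [← hzk x hxi hxj]; exact hxfrac
          · -- z j = 0
            refine ⟨j, hj, ?_⟩
            intro x hx
            obtain ⟨hxS, hxfrac⟩ := Finset.mem_filter.mp hx
            have hxj : x ≠ j := by
              intro h; subst h
              exact hxfrac (Or.inl (by rw [hzj]; exact hmin))
            refine Finset.mem_erase.mpr ⟨hxj, Finset.mem_filter.mpr ⟨hxS, ?_⟩⟩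
            by_cases hxi : x = i
            · subst hxi; exact hifrac
            · rw [← hzk x hxi hxj]; exact hxfrac
        obtain ⟨a, ha, hsubset⟩ := hsubset
        have := Finset.card_le_card hsubset
        rw [Finset.card_erase_of_mem ha, hcard'] at this
        omega
      obtain ⟨yhat, h1, h2, h3⟩ := ih z hzbd hcardz
      exact ⟨yhat, h1, le_trans hwle h2, by rw [hfeq] at h3; exact h3⟩

theorem stmt16
    {ι : Type*} (S : Finset ι) (hS : S.Nonempty)
    (f w : ι → ℝ) (hf : ∀ i ∈ S, 0 < f i) (hw : ∀ i ∈ S, 0 ≤ w i)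
    (H : ℕ) (hH : 1 ≤ H)
    (ybar : ι → ℝ) (hybar : ∀ i ∈ S, 0 ≤ ybar i ∧ ybar i ≤ 1)
    (hsum : (H : ℝ) ≤ ∑ i ∈ S, ybar i) :
    ∃ yhat : ι → ℝ,
      (∀ i ∈ S, yhat i = 0 ∨ yhat i = 1) ∧
      (∑ i ∈ S, w i * ybar i ≤ ∑ i ∈ S, w i * yhat i) ∧
      (∑ i ∈ S, f i * yhat i ≤
        (1 + (S.sup' hS f) / ((H : ℝ) * S.inf' hS f)) * ∑ i ∈ S, f i * ybar i) := by
  classical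
  obtain ⟨yhat, h1, h2, h3⟩ := round_lemma S hS f w hf hw
    (S.filter (fun i => ¬ (ybar i = 0 ∨ ybar i = 1))).card ybar hybar le_rfl
  refine ⟨yhat, h1, h2, ?_⟩
  set F := S.sup' hS f with hFdef
  set m := S.inf' hS f with hmdef
  have hm0 : 0 < m := by
    obtain ⟨a, ha, hma⟩ := S.exists_mem_eq_inf' hS f
    rw [hmdef, hma]; exact hf a ha
  have hF0 : 0 < F := by
    obtain ⟨a, ha⟩ := hS
    exact lt_of_lt_of_le (hf a ha) (Finset.le_sup' f ha)
  have hH1 : (1 : ℝ) ≤ (H : ℝ) := by exact_mod_cast hH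
  have hHm : 0 < (H : ℝ) * m := by positivity
  -- Σ f ybar ≥ m * H
  have hlow : (H : ℝ) * m ≤ ∑ i ∈ S, f i * ybar i := by
    have step : ∀ i ∈ S, m * ybar i ≤ f i * ybar i := by
      intro i hiS
      exact mul_le_mul_of_nonneg_right (Finset.inf'_le f hiS) (hybar i hiS).1
    calc (H : ℝ) * m ≤ (∑ i ∈ S, ybar i) * m := by nlinarith
    _ = ∑ i ∈ S, m * ybar i := by rw [Finset.sum_mul]; exact Finset.sum_congr rfl (fun i _ => mul_comm _ _)
    _ ≤ ∑ i ∈ S, f i * ybar i := Finset.sum_le_sum step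
  have hdiv : F / ((H : ℝ) * m) * ((H : ℝ) * m) = F := div_mul_cancel₀ F (ne_of_gt hHm)
  have hdivnn : 0 ≤ F / ((H : ℝ) * m) := by positivity
  nlinarith [mul_le_mul_of_nonneg_left hlow hdivnn]
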